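/- An ideal triangle (p₁, p₂, p₃) satisfies S_P = (0,0) (i.e., I = K and J = 0) if and only if it is the image of the regular ideal triangle under a rotation about the origin. Equivalently: if p₃ = 0, then J = 0 and I - K = 0 together imply {p₁, p₂} = {√3, -√3}. -/

import Mathlib

/-- An ideal triangle normalized with `p₃ = 0` has hyperbolic barycenter at the origin
(`J = 0` and `I = K`) precisely for `{p₁, p₂} = {√3, -√3}`, i.e. exactly the rotations
about the origin of the regular ideal triangle. -/
theorem stmt_9 (p₁ p₂ p₃ I J K : ℝ)
    (h12 : p₁ ≠ p₂) (h23 : p₂ ≠ p₃) (h31 : p₃ ≠ p₁) (hp3 : p₃ = 0)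
    (hI : I = 1 / (p₁ - p₂) + 1 / (p₂ - p₃) + 1 / (p₃ - p₁))
    (hJ : J = (1 / 2) * ((p₁ + p₂) / (p₁ - p₂) + (p₂ + p₃) / (p₂ - p₃) + (p₃ + p₁) / (p₃ - p₁)))
    (hK : K = p₁ * p₂ / (p₁ - p₂) + p₂ * p₃ / (p₂ - p₃) + p₃ * p₁ / (p₃ - p₁)) :
    (J = 0 ∧ I = K) ↔
      ((p₁ = Real.sqrt 3 ∧ p₂ = -Real.sqrt 3) ∨ (p₁ = -Real.sqrt 3 ∧ p₂ = Real.sqrt 3)) := by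
  subst hp3
  have hp2 : p₂ ≠ 0 := h23
  have hp1 : p₁ ≠ 0 := fun h => h31 h.symm
  have hsub : p₁ - p₂ ≠ 0 := sub_ne_zero.mpr h12
  have hs : Real.sqrt 3 ^ 2 = 3 := Real.sq_sqrt (by norm_num)
  have hspos : (0:ℝ) < Real.sqrt 3 := Real.sqrt_pos.mpr (by norm_num)
  subst hI hJ hK
  constructor
  · rintro ⟨hJ0, hIK⟩
    have h2 : p₂ = -p₁ := by
      field_simp at hJ0
      have h' : p₁ * p₂ * (p₁ + p₂) = 0 := by linear_combination -hJ0
      rcases mul_eq_zero.mp h' with h | h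
      · exact absurd h (mul_ne_zero hp1 hp2)
      · linarith
    subst h2
    have h2p : p₁ + p₁ ≠ 0 := by intro h; exact hp1 (by linarith)
    have h3 : (p₁ - Real.sqrt 3) * (p₁ + Real.sqrt 3) = 0 := by
      field_simp [h2p] at hIK
      have h5 : p₁ ^ 3 * (p₁ ^ 2 - 3) = 0 := by linear_combination p₁ * hIK
      have h6 : p₁ ^ 3 ≠ 0 := pow_ne_zero _ hp1
      have h4 : p₁ ^ 2 = 3 := by
        rcases mul_eq_zero.mp h5 with h | h
        · exact absurd h h6
        · linarith
      linear_combination h4 - hs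
    rcases mul_eq_zero.mp h3 with h | h
    · exact Or.inl ⟨by linarith, by linarith⟩
    · exact Or.inr ⟨by linarith, by linarith⟩
  · rintro (⟨h1, h2⟩ | ⟨h1, h2⟩) <;> subst h1 <;> subst h2 <;>
      constructor <;> field_simp <;> nlinarith [hs, hspos]
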